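/- Let (X,d,μ) be a complete metric measure space with a doubling measure μ (doubling constant C_d). Let F be a measurable subset of a ball B ⊂ X with μ(F) > 0. Then there exists a constant A > 1, depending only on C_d, such that the function f = log⁺( (μ(B)/μ(F)) · M(χ_F) ) belongs to BMO(X) with ‖f‖_{BMO(X)} ≤ A. -/

import Mathlib

open MeasureTheory Metric Set
open scoped ENNReal

/-- The (uncentered) Hardy–Littlewood maximal function of `f`:
`Mf(x) = sup { ⨍_B |f| dμ : B a ball containing x }`. -/
noncomputable def HLMax {X : Type*} [PseudoMetricSpace X] [MeasurableSpace X]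
    (μ : Measure X) (f : X → ℝ) (x : X) : ℝ≥0∞ :=
  ⨆ (z : X) (r : ℝ) (_ : x ∈ ball z r),
    (μ (ball z r))⁻¹ * ∫⁻ y in ball z r, ENNReal.ofReal |f y| ∂μ

set_option linter.unusedSectionVars false
set_option linter.unusedVariables false
set_option linter.deprecated false

section Aux
variable {X : Type*} [MetricSpace X] [MeasurableSpace X] [BorelSpace X] (μ : Measure X)

/-- maximal function of a set -/
noncomputable def MX (G : Set X) (x : X) : ℝ≥0∞ :=
  ⨆ (z : X) (r : ℝ) (_ : x ∈ ball z r), (μ (ball z r))⁻¹ * μ (G ∩ ball z r)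

variable {μ}

lemma hlmax_eq {G : Set X} (hG : MeasurableSet G) :
    HLMax μ (G.indicator fun _ => (1 : ℝ)) = MX μ G := by
  funext x
  unfold HLMax MX
  congr 1; funext z; congr 1; funext r; congr 1; funext _
  congr 1
  have h1 : (fun y => ENNReal.ofReal |G.indicator (fun _ => (1:ℝ)) y|)
      = G.indicator (fun _ => (1 : ℝ≥0∞)) := by
    funext y; by_cases h : y ∈ G <;> simp [h]
  rw [h1, lintegral_indicator hG, setLIntegral_one, Measure.restrict_apply hG]

lemma term_le_MX {G : Set X} {x z : X} {r : ℝ} (h : x ∈ ball z r) :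
    (μ (ball z r))⁻¹ * μ (G ∩ ball z r) ≤ MX μ G x := by
  refine le_iSup_of_le z (le_iSup_of_le r ?_)
  exact le_iSup_of_le h le_rfl

lemma MX_le_one {G : Set X} (x : X) : MX μ G x ≤ 1 := by
  refine iSup_le fun z => iSup_le fun r => iSup_le fun _ => ?_
  rcases eq_or_ne (μ (ball z r)) 0 with h0 | h0
  · have : μ (G ∩ ball z r) = 0 := measure_mono_null inter_subset_right h0
    simp [this]
  rcases eq_or_ne (μ (ball z r)) ∞ with ht | ht
  · simp [ht]
  calc (μ (ball z r))⁻¹ * μ (G ∩ ball z r) ≤ (μ (ball z r))⁻¹ * μ (ball z r) :=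
        mul_le_mul_right (measure_mono inter_subset_right) _
    _ = 1 := ENNReal.inv_mul_cancel h0 ht

lemma MX_mono {G G' : Set X} (h : G ⊆ G') (x : X) : MX μ G x ≤ MX μ G' x := by
  refine iSup_le fun z => iSup_le fun r => iSup_le fun hx => ?_
  exact le_trans (mul_le_mul_right (measure_mono (inter_subset_inter_left _ h)) _) (term_le_MX hx)

lemma MX_split {F G1 G2 : Set X} (h : F ⊆ G1 ∪ G2) (x : X) :
    MX μ F x ≤ MX μ G1 x + MX μ G2 x := by
  refine iSup_le fun z => iSup_le fun r => iSup_le fun hx => ?_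
  have h1 : μ (F ∩ ball z r) ≤ μ (G1 ∩ ball z r) + μ (G2 ∩ ball z r) := by
    refine le_trans (measure_mono ?_) (measure_union_le _ _)
    rw [← union_inter_distrib_right]
    exact inter_subset_inter_left _ h
  calc (μ (ball z r))⁻¹ * μ (F ∩ ball z r)
      ≤ (μ (ball z r))⁻¹ * (μ (G1 ∩ ball z r) + μ (G2 ∩ ball z r)) := mul_le_mul_right h1 _
    _ = (μ (ball z r))⁻¹ * μ (G1 ∩ ball z r) + (μ (ball z r))⁻¹ * μ (G2 ∩ ball z r) := by
        ring
    _ ≤ MX μ G1 x + MX μ G2 x := add_le_add (term_le_MX hx) (term_le_MX hx)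

lemma MX_zero {G : Set X} (h : μ G = 0) (x : X) : MX μ G x = 0 := by
  refine le_antisymm (iSup_le fun z => iSup_le fun r => iSup_le fun _ => ?_) zero_le
  have : μ (G ∩ ball z r) = 0 := measure_mono_null inter_subset_left h
  simp [this]

lemma measurable_MX (G : Set X) : Measurable (MX μ G) := by
  have : LowerSemicontinuous (MX μ G) := by
    apply lowerSemicontinuous_iSup (f := fun z x => ⨆ (r : ℝ) (_ : x ∈ ball z r),
      (μ (ball z r))⁻¹ * μ (G ∩ ball z r))
    intro z
    apply lowerSemicontinuous_iSup (f := fun r x => ⨆ (_ : x ∈ ball z r),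
      (μ (ball z r))⁻¹ * μ (G ∩ ball z r))
    intro r
    have heq : (fun x => ⨆ (_ : x ∈ ball z r), (μ (ball z r))⁻¹ * μ (G ∩ ball z r))
        = (ball z r).indicator (fun _ => (μ (ball z r))⁻¹ * μ (G ∩ ball z r)) := by
      funext x; by_cases h : x ∈ ball z r <;> simp [h]
    rw [heq]
    exact isOpen_ball.lowerSemicontinuous_indicator zero_le
  exact this.measurable

end Aux

section Doub
variable {X : Type*} [MetricSpace X] [MeasurableSpace X] [BorelSpace X] {μ : Measure X}
variable {Cd : ℝ}

lemma D_pos (hCd : 1 < Cd) : (1:ℝ≥0∞) ≤ ENNReal.ofReal Cd := by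
  rw [show (1:ℝ≥0∞) = ENNReal.ofReal 1 by simp]
  exact ENNReal.ofReal_le_ofReal hCd.le

lemma ball_pow_le (hCd : 1 < Cd)
    (hdoub : ∀ (x : X) (r : ℝ), 0 < r →
      0 < μ (ball x r) ∧ μ (ball x r) < ⊤ ∧
      μ (ball x (2 * r)) ≤ ENNReal.ofReal Cd * μ (ball x r))
    (k : ℕ) (x : X) {r r' : ℝ} (hr : 0 < r) (hr' : r' ≤ 2^k * r) :
    μ (ball x r') ≤ (ENNReal.ofReal Cd)^k * μ (ball x r) := by
  have main : ∀ k : ℕ, μ (ball x (2^k * r)) ≤ (ENNReal.ofReal Cd)^k * μ (ball x r) := by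
    intro k
    induction k with
    | zero => simp
    | succ n ih =>
      have h2 : (2:ℝ)^(n+1) * r = 2 * (2^n * r) := by ring
      have hpos : 0 < 2^n * r := by positivity
      calc μ (ball x (2^(n+1) * r)) = μ (ball x (2 * (2^n * r))) := by rw [h2]
        _ ≤ ENNReal.ofReal Cd * μ (ball x (2^n * r)) := (hdoub x _ hpos).2.2
        _ ≤ ENNReal.ofReal Cd * ((ENNReal.ofReal Cd)^n * μ (ball x r)) :=
            mul_le_mul_right ih _
        _ = (ENNReal.ofReal Cd)^(n+1) * μ (ball x r) := by ring
  exact le_trans (measure_mono (ball_subset_ball hr')) (main k)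

lemma key_compare {B1 B2 : Set X} (h12 : B1 ⊆ B2) {c : ℝ≥0∞} (hc0 : c ≠ 0) (hc : c ≠ ∞)
    (hμ2 : μ B2 ≤ c * μ B1) (G : Set X) :
    (μ B1)⁻¹ * μ (G ∩ B1) ≤ c * ((μ B2)⁻¹ * μ (G ∩ B2)) := by
  have h1 : (μ B1)⁻¹ ≤ c * (μ B2)⁻¹ := by
    calc (μ B1)⁻¹ = (c * c⁻¹) * (μ B1)⁻¹ := by rw [ENNReal.mul_inv_cancel hc0 hc, one_mul]
      _ = c * (c * μ B1)⁻¹ := by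
          rw [ENNReal.mul_inv (Or.inl hc0) (Or.inl hc)]; ring
      _ ≤ c * (μ B2)⁻¹ := mul_le_mul_right (ENNReal.inv_le_inv' hμ2) _
  calc (μ B1)⁻¹ * μ (G ∩ B1) ≤ (c * (μ B2)⁻¹) * μ (G ∩ B2) :=
        mul_le_mul' h1 (measure_mono (inter_subset_inter_right _ h12))
    _ = c * ((μ B2)⁻¹ * μ (G ∩ B2)) := by ring

lemma lt_term_mul {a m t : ℝ≥0∞} (ha0 : a ≠ 0) (ha : a ≠ ∞) (h : t < a⁻¹ * m) :
    t * a ≤ m := by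
  calc t * a ≤ (a⁻¹ * m) * a := mul_le_mul_left h.le _
    _ = m * (a⁻¹ * a) := by ring
    _ = m := by rw [ENNReal.inv_mul_cancel ha0 ha, mul_one]

end Doub

section Osc
variable {X : Type*} [MetricSpace X] [MeasurableSpace X] [BorelSpace X] {μ : Measure X}
variable {Cd : ℝ}

lemma osc2 (hCd : 1 < Cd)
    (hdoub : ∀ (x : X) (r : ℝ), 0 < r →
      0 < μ (ball x r) ∧ μ (ball x r) < ⊤ ∧
      μ (ball x (2 * r)) ≤ ENNReal.ofReal Cd * μ (ball x r))
    {z : X} {R' : ℝ} (hR' : 0 < R') {G : Set X} (hG : G ∩ ball z (2*R') = ∅)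
    {y y' : X} (hy : y ∈ ball z R') (hy' : y' ∈ ball z R') :
    MX μ G y ≤ (ENNReal.ofReal Cd)^3 * MX μ G y' := by
  have hD0 : (ENNReal.ofReal Cd) ≠ 0 := by
    intro h; simpa [h] using D_pos hCd
  have hDt : (ENNReal.ofReal Cd) ≠ ∞ := ENNReal.ofReal_ne_top
  refine iSup_le fun w => iSup_le fun r => iSup_le fun hyw => ?_
  rcases eq_or_ne (μ (G ∩ ball w r)) 0 with h0 | h0
  · simp [h0]
  obtain ⟨p, hpG, hpw⟩ := nonempty_of_measure_ne_zero h0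
  rw [mem_ball] at hyw hy hy'
  have hr0 : 0 < r := lt_of_le_of_lt dist_nonneg hyw
  have hpz : ¬ p ∈ ball z (2*R') := fun hp => by
    have : p ∈ G ∩ ball z (2*R') := ⟨hpG, hp⟩
    rw [hG] at this; exact this
  rw [mem_ball, not_lt] at hpz
  rw [mem_ball] at hpw
  have h1 : dist p y < 2*r := by
    calc dist p y ≤ dist p w + dist w y := dist_triangle _ _ _
      _ < r + r := by rw [dist_comm w y]; exact add_lt_add hpw hyw
      _ = 2*r := by ring
  have h2 : R' < 2*r := by
    have : dist p z ≤ dist p y + dist y z := dist_triangle _ _ _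
    have := lt_of_le_of_lt this (add_lt_add h1 hy)
    linarith
  have hy'w : y' ∈ ball w (r + 2*R') := by
    rw [mem_ball]
    calc dist y' w ≤ dist y' y + dist y w := dist_triangle _ _ _
      _ ≤ (dist y' z + dist z y) + dist y w := by
          gcongr; exact dist_triangle _ _ _
      _ < (R' + R') + r := by rw [dist_comm z y]; exact add_lt_add (add_lt_add hy' hy) hyw
      _ = r + 2*R' := by ring
  have hsub : ball w r ⊆ ball w (r + 2*R') := ball_subset_ball (by linarith)
  have hmeas : μ (ball w (r + 2*R')) ≤ (ENNReal.ofReal Cd)^3 * μ (ball w r) :=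
    ball_pow_le hCd hdoub 3 w hr0 (by norm_num; linarith)
  calc (μ (ball w r))⁻¹ * μ (G ∩ ball w r)
      ≤ (ENNReal.ofReal Cd)^3 * ((μ (ball w (r + 2*R')))⁻¹ * μ (G ∩ ball w (r + 2*R'))) :=
        key_compare hsub (pow_ne_zero _ hD0) (ENNReal.pow_ne_top hDt) hmeas G
    _ ≤ (ENNReal.ofReal Cd)^3 * MX μ G y' := mul_le_mul_right (term_le_MX hy'w) _

lemma MX_lower (hCd : 1 < Cd)
    (hdoub : ∀ (x : X) (r : ℝ), 0 < r →
      0 < μ (ball x r) ∧ μ (ball x r) < ⊤ ∧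
      μ (ball x (2 * r)) ≤ ENNReal.ofReal Cd * μ (ball x r))
    {z : X} {R' : ℝ} (hR' : 0 < R') {G : Set X} (hG : G ⊆ ball z (2*R'))
    {y : X} (hy : y ∈ ball z R') :
    ((ENNReal.ofReal Cd)^2 * μ (ball z R'))⁻¹ * μ G ≤ MX μ G y := by
  rw [mem_ball] at hy
  have hyy : y ∈ ball y (3*R') := mem_ball_self (by linarith)
  have hGsub : G ∩ ball y (3*R') = G := by
    apply Set.inter_eq_left.mpr
    intro q hq
    have := hG hq
    rw [mem_ball] at this ⊢
    calc dist q y ≤ dist q z + dist z y := dist_triangle _ _ _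
      _ < 2*R' + R' := by rw [dist_comm z y]; exact add_lt_add this hy
      _ = 3*R' := by ring
  have hmeas : μ (ball y (3*R')) ≤ (ENNReal.ofReal Cd)^2 * μ (ball z R') := by
    have hsub : ball y (3*R') ⊆ ball z (4*R') := by
      intro q hq
      rw [mem_ball] at hq ⊢
      calc dist q z ≤ dist q y + dist y z := dist_triangle _ _ _
        _ < 3*R' + R' := add_lt_add hq hy
        _ = 4*R' := by ring
    exact le_trans (measure_mono hsub) (ball_pow_le hCd hdoub 2 z hR' (by norm_num))
  calc ((ENNReal.ofReal Cd)^2 * μ (ball z R'))⁻¹ * μ G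
      ≤ (μ (ball y (3*R')))⁻¹ * μ (G ∩ ball y (3*R')) := by
        rw [hGsub]; exact mul_le_mul_left (ENNReal.inv_le_inv' hmeas) _
    _ ≤ MX μ G y := term_le_MX hyy

end Osc

section RealSide

lemma logplus_mono {x y : ℝ} (hx : 0 ≤ x) (hxy : x ≤ y) :
    max 0 (Real.log x) ≤ max 0 (Real.log y) := by
  rcases eq_or_lt_of_le hx with h | h
  · simp [← h, Real.log_zero]
  · exact max_le_max le_rfl (Real.log_le_log h hxy)

lemma pointwise_core {a σ b c Cd : ℝ} (hCd : 1 < Cd) (hσ : 0 < σ) (hc : 0 < c)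
    (h1 : σ ≤ a) (h2 : a ≤ b + Cd^6 * σ) (hb : 0 ≤ b) :
    |max 0 (Real.log (c * a)) - max 0 (Real.log (c * σ))| ≤
      Real.log 2 + 6 * Real.log Cd + (Real.log (max b σ) - Real.log σ) := by
  have ha : 0 < a := lt_of_lt_of_le hσ h1
  have step1 : |max 0 (Real.log (c * a)) - max 0 (Real.log (c * σ))| ≤
      |Real.log (c * a) - Real.log (c * σ)| := by
    rw [max_comm 0 (Real.log (c * a)), max_comm 0 (Real.log (c * σ))]
    exact abs_max_sub_max_le_abs _ _ _
  have step2 : Real.log (c * a) - Real.log (c * σ) = Real.log a - Real.log σ := by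
    rw [Real.log_mul hc.ne' ha.ne', Real.log_mul hc.ne' hσ.ne']; ring
  have hlogmono : Real.log σ ≤ Real.log a := Real.log_le_log hσ h1
  have step3 : a ≤ 2 * Cd^6 * max b σ := by
    have hCd6 : (1:ℝ) ≤ Cd^6 := one_le_pow₀ hCd.le
    have hbm : b ≤ max b σ := le_max_left _ _
    have hsm : σ ≤ max b σ := le_max_right _ _
    nlinarith [lt_of_lt_of_le hσ hsm]
  have hmaxpos : 0 < max b σ := lt_of_lt_of_le hσ (le_max_right _ _)
  have step4 : Real.log a ≤ Real.log 2 + 6 * Real.log Cd + Real.log (max b σ) := by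
    have h5 : Real.log a ≤ Real.log (2 * Cd^6 * max b σ) :=
      Real.log_le_log ha step3
    rw [Real.log_mul (by positivity) hmaxpos.ne', Real.log_mul (by norm_num)
      (by positivity), Real.log_pow] at h5
    push_cast at h5
    linarith
  calc |max 0 (Real.log (c * a)) - max 0 (Real.log (c * σ))|
      ≤ |Real.log (c * a) - Real.log (c * σ)| := step1
    _ = |Real.log a - Real.log σ| := by rw [step2]
    _ = Real.log a - Real.log σ := abs_of_nonneg (by linarith)
    _ ≤ Real.log 2 + 6 * Real.log Cd + (Real.log (max b σ) - Real.log σ) := by linarith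

end RealSide

section Layer

lemma layer_bound {σ b : ℝ} (hσ : 0 < σ) :
    ENNReal.ofReal (Real.log (max b σ) - Real.log σ) ≤
      ∑' k : ℕ, if σ * Real.exp k < b then (1:ℝ≥0∞) else 0 := by
  set v := max b σ / σ with hv
  have hmaxpos : 0 < max b σ := lt_of_lt_of_le hσ (le_max_right _ _)
  have hv0 : 0 < v := div_pos hmaxpos hσ
  have hlog : Real.log (max b σ) - Real.log σ = Real.log v :=
    (Real.log_div hmaxpos.ne' hσ.ne').symm
  have hcond : ∀ k : ℕ, (σ * Real.exp k < b) ↔ (Real.exp k < v) := by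
    intro k
    rcases le_or_gt b σ with hb | hb
    · have h1 : max b σ = σ := max_eq_right hb
      have hek : (1:ℝ) ≤ Real.exp k := Real.one_le_exp (Nat.cast_nonneg k)
      constructor
      · intro h; exfalso; nlinarith
      · intro h; exfalso; rw [hv, h1, div_self hσ.ne'] at h; linarith
    · have h1 : max b σ = b := max_eq_left hb.le
      rw [hv, h1, lt_div_iff₀ hσ]
      constructor <;> intro h <;> linarith
  rw [hlog]
  set m := ⌈Real.log v⌉₊ with hm
  have hcond2 : ∀ k : ℕ, (σ * Real.exp k < b) ↔ k < m := by
    intro k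
    rw [hcond k, hm, Nat.lt_ceil]
    constructor
    · intro h
      have h' : Real.exp (k:ℝ) < Real.exp (Real.log v) := by rwa [Real.exp_log hv0]
      exact Real.exp_lt_exp.mp h'
    · intro h
      have h' := Real.exp_lt_exp.mpr h
      rwa [Real.exp_log hv0] at h'
  have hsum : ∑' k : ℕ, (if σ * Real.exp k < b then (1:ℝ≥0∞) else 0) = m := by
    have h1 : ∑' k : ℕ, (if σ * Real.exp k < b then (1:ℝ≥0∞) else 0)
        = ∑ k ∈ Finset.range m, (if σ * Real.exp k < b then (1:ℝ≥0∞) else 0) := by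
      apply tsum_eq_sum
      intro k hk
      rw [Finset.mem_range] at hk
      simp [hcond2 k, hk]
    rw [h1]
    have h2 : ∀ k ∈ Finset.range m, (if σ * Real.exp k < b then (1:ℝ≥0∞) else 0) = 1 := by
      intro k hk
      rw [Finset.mem_range] at hk
      simp [hcond2 k, hk]
    rw [Finset.sum_congr rfl h2]
    simp
  rw [hsum]
  calc ENNReal.ofReal (Real.log v) ≤ ENNReal.ofReal (m : ℝ) :=
        ENNReal.ofReal_le_ofReal (Nat.le_ceil _)
    _ = (m : ℝ≥0∞) := ENNReal.ofReal_natCast m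

lemma geom_bound : ∑' k : ℕ, ENNReal.ofReal (Real.exp (-(k:ℝ))) ≤ 2 := by
  have h1 : ∀ k : ℕ, ENNReal.ofReal (Real.exp (-(k:ℝ))) ≤ (2⁻¹ : ℝ≥0∞)^k := by
    intro k
    have h2 : Real.exp (-(k:ℝ)) = (Real.exp (-1))^k := by
      rw [← Real.exp_nat_mul]; norm_num
    have h3 : Real.exp (-1) ≤ 2⁻¹ := by
      rw [Real.exp_neg]
      have h4 : (2:ℝ) ≤ Real.exp 1 := by
        have := Real.add_one_le_exp (1:ℝ)
        linarith
      exact inv_anti₀ (by norm_num) h4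
    calc ENNReal.ofReal (Real.exp (-(k:ℝ))) = (ENNReal.ofReal (Real.exp (-1)))^k := by
          rw [h2, ENNReal.ofReal_pow (Real.exp_pos _).le]
      _ ≤ (2⁻¹ : ℝ≥0∞)^k := by
          apply pow_le_pow_left' (le_trans (ENNReal.ofReal_le_ofReal h3) ?_)
          rw [← ENNReal.ofReal_ofNat 2, ← ENNReal.ofReal_inv_of_pos (by norm_num)]
  calc ∑' k : ℕ, ENNReal.ofReal (Real.exp (-(k:ℝ))) ≤ ∑' k : ℕ, (2⁻¹ : ℝ≥0∞)^k :=
        ENNReal.tsum_le_tsum h1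
    _ = (1 - 2⁻¹)⁻¹ := ENNReal.tsum_geometric _
    _ = 2 := by rw [ENNReal.one_sub_inv_two, inv_inv]

end Layer

section Weak
variable {X : Type*} [MetricSpace X] [MeasurableSpace X] [BorelSpace X] {μ : Measure X}
variable {Cd : ℝ}

lemma weak_type (hCd : 1 < Cd)
    (hdoub : ∀ (x : X) (r : ℝ), 0 < r →
      0 < μ (ball x r) ∧ μ (ball x r) < ⊤ ∧
      μ (ball x (2 * r)) ≤ ENNReal.ofReal Cd * μ (ball x r))
    {z : X} {R' : ℝ} (hR' : 0 < R') {G : Set X} (hGm : MeasurableSet G)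
    (hGsub : G ⊆ ball z (2*R')) (t : ℝ≥0∞) :
    t * μ ({y | t < MX μ G y} ∩ ball z R') ≤ (ENNReal.ofReal Cd)^5 * μ G := by
  set D := ENNReal.ofReal Cd with hD
  set E := {y | t < MX μ G y} ∩ ball z R' with hE
  have claim : ∀ y ∈ E, ∃ ρ : ℝ, 0 < ρ ∧ ρ ≤ 3*R' ∧
      t * μ (ball y ρ) ≤ D^2 * μ (G ∩ ball y ρ) := by
    rintro y ⟨hyt, hyz⟩
    rw [mem_setOf_eq] at hyt
    rw [mem_ball] at hyz
    obtain ⟨w, hw⟩ := lt_iSup_iff.mp hyt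
    obtain ⟨r, hr⟩ := lt_iSup_iff.mp hw
    obtain ⟨hyw, hlt⟩ := lt_iSup_iff.mp hr
    rw [mem_ball] at hyw
    have hr0 : 0 < r := lt_of_le_of_lt dist_nonneg hyw
    obtain ⟨hb0, hbt, -⟩ := hdoub w r hr0
    have hkey : t * μ (ball w r) ≤ μ (G ∩ ball w r) := lt_term_mul hb0.ne' hbt.ne hlt
    have sub2 : ∀ s : ℝ, s ≤ 3*r → ball y s ⊆ ball w (4*r) := by
      intro s hs q hq
      rw [mem_ball] at hq ⊢
      calc dist q w ≤ dist q y + dist y w := dist_triangle _ _ _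
        _ < s + r := add_lt_add hq hyw
        _ ≤ 4*r := by linarith
    by_cases hcase : 2*r ≤ 3*R'
    · refine ⟨2*r, by linarith, hcase, ?_⟩
      have sub1 : ball w r ⊆ ball y (2*r) := by
        intro q hq
        rw [mem_ball] at hq ⊢
        calc dist q y ≤ dist q w + dist w y := dist_triangle _ _ _
          _ < r + r := by rw [dist_comm w y]; exact add_lt_add hq hyw
          _ = 2*r := by ring
      have hm : μ (ball y (2*r)) ≤ D^2 * μ (ball w r) :=
        le_trans (measure_mono (sub2 (2*r) (by linarith)))
          (ball_pow_le hCd hdoub 2 w hr0 (by norm_num))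
      calc t * μ (ball y (2*r)) ≤ t * (D^2 * μ (ball w r)) := mul_le_mul_right hm _
        _ = D^2 * (t * μ (ball w r)) := by ring
        _ ≤ D^2 * μ (G ∩ ball w r) := mul_le_mul_right hkey _
        _ ≤ D^2 * μ (G ∩ ball y (2*r)) :=
            mul_le_mul_right (measure_mono (inter_subset_inter_right _ sub1)) _
    · push_neg at hcase
      refine ⟨3*R', by linarith, le_refl _, ?_⟩
      have hGin : G ∩ ball y (3*R') = G := by
        apply Set.inter_eq_left.mpr
        intro q hq
        have := hGsub hq
        rw [mem_ball] at this ⊢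
        calc dist q y ≤ dist q z + dist z y := dist_triangle _ _ _
          _ < 2*R' + R' := by rw [dist_comm z y]; exact add_lt_add this hyz
          _ = 3*R' := by ring
      have hm : μ (ball y (3*R')) ≤ D^2 * μ (ball w r) :=
        le_trans (measure_mono (sub2 (3*R') (by linarith)))
          (ball_pow_le hCd hdoub 2 w hr0 (by norm_num))
      calc t * μ (ball y (3*R')) ≤ t * (D^2 * μ (ball w r)) := mul_le_mul_right hm _
        _ = D^2 * (t * μ (ball w r)) := by ring
        _ ≤ D^2 * μ (G ∩ ball w r) := mul_le_mul_right hkey _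
        _ ≤ D^2 * μ (G ∩ ball y (3*R')) := by
            rw [hGin]; exact mul_le_mul_right (measure_mono inter_subset_left) _
  choose! ρ hρ0 hρ3 hρw using claim
  obtain ⟨u, huE, hdisj, hcov⟩ :=
    Vitali.exists_disjoint_subfamily_covering_enlargement_closedBall E (fun a => a) ρ (3*R')
      (fun a ha => hρ3 a ha) 4 (by norm_num)
  have hEsub : E ⊆ ⋃ b ∈ u, ball b (5 * ρ b) := by
    intro a ha
    obtain ⟨b, hbu, hsub⟩ := hcov a ha
    have hab : a ∈ closedBall b (4 * ρ b) := hsub (mem_closedBall_self (hρ0 a ha).le)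
    exact mem_biUnion hbu (closedBall_subset_ball (by linarith [hρ0 b (huE hbu)]) hab)
  have hcnt : u.Countable := by
    have h1 : ∀ b : u, 0 < μ (closedBall (b:X) (ρ b)) := fun b =>
      lt_of_lt_of_le (hdoub b (ρ b) (hρ0 b (huE b.2))).1 (measure_mono ball_subset_closedBall)
    have hUn : μ (⋃ b : u, closedBall (b:X) (ρ b)) ≠ ∞ := by
      have hsub : (⋃ b : u, closedBall (b:X) (ρ b)) ⊆ ball z (5*R') := by
        refine iUnion_subset fun b => ?_
        intro q hq
        rw [mem_closedBall] at hq
        have hbz : dist (b:X) z < R' := mem_ball.mp (huE b.2).2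
        rw [mem_ball]
        calc dist q z ≤ dist q b + dist (b:X) z := dist_triangle _ _ _
          _ < 3*R' + R' := add_lt_add_of_le_of_lt (le_trans hq (hρ3 b (huE b.2))) hbz
          _ < 5*R' := by linarith
      exact ne_top_of_le_ne_top (hdoub z (5*R') (by linarith)).2.1.ne (measure_mono hsub)
    have hdisj' : Pairwise (Function.onFun Disjoint fun b : u => closedBall (b:X) (ρ b)) := by
      intro b c hbc
      exact hdisj b.2 c.2 (fun h => hbc (Subtype.ext h))
    have hct := MeasureTheory.Measure.countable_meas_pos_of_disjoint_of_meas_iUnion_ne_top μ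
      (fun b : u => measurableSet_closedBall) hdisj' hUn
    have huniv : {i : u | 0 < μ (closedBall (i:X) (ρ i))} = Set.univ :=
      eq_univ_iff_forall.mpr h1
    rw [huniv] at hct
    rw [← Set.countable_coe_iff]
    exact countable_univ_iff.mp hct
  haveI : Countable u := hcnt.to_subtype
  have step1 : μ E ≤ ∑' b : u, μ (ball (b:X) (5 * ρ b)) :=
    le_trans (measure_mono hEsub) (measure_biUnion_le μ hcnt _)
  have step2 : ∀ b : u, μ (ball (b:X) (5 * ρ b)) ≤ D^3 * μ (ball (b:X) (ρ b)) := fun b =>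
    ball_pow_le hCd hdoub 3 b (hρ0 b (huE b.2)) (by norm_num; linarith [hρ0 b (huE b.2)])
  have step3 : ∑' b : u, μ (G ∩ ball (b:X) (ρ b)) ≤ μ G := by
    have hdisj2 : Pairwise (Function.onFun Disjoint fun b : u => G ∩ ball (b:X) (ρ b)) := by
      intro b c hbc
      refine Disjoint.mono ?_ ?_ (hdisj b.2 c.2 (fun h => hbc (Subtype.ext h))) <;>
        exact inter_subset_right.trans ball_subset_closedBall
    rw [← measure_iUnion hdisj2 (fun b => hGm.inter measurableSet_ball)]
    exact measure_mono (iUnion_subset fun b => inter_subset_left)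
  calc t * μ E ≤ t * ∑' b : u, μ (ball (b:X) (5 * ρ b)) := mul_le_mul_right step1 _
    _ ≤ t * ∑' b : u, D^3 * μ (ball (b:X) (ρ b)) :=
        mul_le_mul_right (ENNReal.tsum_le_tsum step2) _
    _ = D^3 * ∑' b : u, t * μ (ball (b:X) (ρ b)) := by
        rw [ENNReal.tsum_mul_left, ENNReal.tsum_mul_left]; ring
    _ ≤ D^3 * ∑' b : u, D^2 * μ (G ∩ ball (b:X) (ρ b)) :=
        mul_le_mul_right (ENNReal.tsum_le_tsum (fun (b : u) => hρw b (huE b.2))) _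
    _ = D^5 * ∑' b : u, μ (G ∩ ball (b:X) (ρ b)) := by
        rw [ENNReal.tsum_mul_left]; ring
    _ ≤ D^5 * μ G := mul_le_mul_right step3 _

end Weak

section Main
variable {X : Type*} [MetricSpace X] [MeasurableSpace X] [BorelSpace X] {μ : Measure X}
variable {Cd : ℝ}

lemma ball_estimate (hCd : 1 < Cd)
    (hdoub : ∀ (x : X) (r : ℝ), 0 < r →
      0 < μ (ball x r) ∧ μ (ball x r) < ⊤ ∧
      μ (ball x (2 * r)) ≤ ENNReal.ofReal Cd * μ (ball x r))
    {x₀ : X} {R : ℝ} (hR : 0 < R) {F : Set X} (hFm : MeasurableSet F)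
    (hFsub : F ⊆ ball x₀ R) (hFpos : 0 < μ F) {z : X} {R' : ℝ} (hR' : 0 < R') :
    ⨍ y in ball z R',
        |max 0 (Real.log ((μ (ball x₀ R)).toReal / (μ F).toReal * (MX μ F y).toReal)) -
          ⨍ w in ball z R',
            max 0 (Real.log ((μ (ball x₀ R)).toReal / (μ F).toReal * (MX μ F w).toReal)) ∂μ| ∂μ
      ≤ 2 * (Real.log 2 + 6 * Real.log Cd + 2 * Cd^7) := by
  have hCd0 : (0:ℝ) < Cd := lt_trans one_pos hCd
  set D := ENNReal.ofReal Cd with hD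
  have hD1 : (1:ℝ≥0∞) ≤ D := D_pos hCd
  have hD0 : D ≠ 0 := fun h => by simp [h] at hD1
  have hDt : D ≠ ∞ := ENNReal.ofReal_ne_top
  obtain ⟨hB'0, hB't, -⟩ := hdoub z R' hR'
  set B' := ball z R' with hB'
  set c := (μ (ball x₀ R)).toReal / (μ F).toReal with hc_def
  set f : X → ℝ := fun y => max 0 (Real.log (c * (MX μ F y).toReal)) with hf_def
  show ⨍ y in B', |f y - ⨍ w in B', f w ∂μ| ∂μ ≤ _
  -- basic positivity
  obtain ⟨hB0, hBt, -⟩ := hdoub x₀ R hR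
  have hFt : μ F < ∞ := lt_of_le_of_lt (measure_mono hFsub) hBt
  have hc : 0 < c := div_pos (ENNReal.toReal_pos hB0.ne' hBt.ne)
    (ENNReal.toReal_pos hFpos.ne' hFt.ne)
  -- the decomposition
  set F1 := F ∩ ball z (2*R') with hF1_def
  set F2 := F \ ball z (2*R') with hF2_def
  have hF1m : MeasurableSet F1 := hFm.inter measurableSet_ball
  have hF1sub : F1 ⊆ ball z (2*R') := inter_subset_right
  have hF2dis : F2 ∩ ball z (2*R') = ∅ := by
    rw [hF2_def]; exact diff_inter_self
  have hF12 : F ⊆ F1 ∪ F2 := by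
    rw [hF1_def, hF2_def, inter_union_diff]
  have hz : z ∈ B' := mem_ball_self hR'
  have hF1t : μ F1 ≠ ∞ := (lt_of_le_of_lt (measure_mono inter_subset_left) hFt).ne
  -- the comparison constant S
  set S : ℝ≥0∞ := max ((D^2 * μ B')⁻¹ * μ F1) ((D^3)⁻¹ * MX μ F2 z) with hS_def
  have hD3_0 : D^3 ≠ 0 := pow_ne_zero _ hD0
  have hD3_t : D^3 ≠ ∞ := ENNReal.pow_ne_top hDt
  have hSle : ∀ y ∈ B', S ≤ MX μ F y := by
    intro y hy
    apply max_le
    · exact le_trans (MX_lower hCd hdoub hR' hF1sub hy) (MX_mono inter_subset_left y)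
    · have hosc := osc2 hCd hdoub hR' hF2dis hz hy
      calc (D^3)⁻¹ * MX μ F2 z ≤ (D^3)⁻¹ * (D^3 * MX μ F2 y) := mul_le_mul_right hosc _
        _ = ((D^3)⁻¹ * D^3) * MX μ F2 y := by ring
        _ = MX μ F2 y := by rw [ENNReal.inv_mul_cancel hD3_0 hD3_t, one_mul]
        _ ≤ MX μ F y := MX_mono diff_subset y
  have hSub : ∀ y ∈ B', MX μ F y ≤ MX μ F1 y + D^6 * S := by
    intro y hy
    have h2 : MX μ F2 y ≤ D^6 * S := by
      calc MX μ F2 y ≤ D^3 * MX μ F2 z := osc2 hCd hdoub hR' hF2dis hy hz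
        _ = D^6 * ((D^3)⁻¹ * MX μ F2 z) := by
            rw [← mul_assoc]
            congr 1
            rw [show (6:ℕ) = 3 + 3 by norm_num, pow_add, mul_assoc,
              ENNReal.mul_inv_cancel hD3_0 hD3_t, mul_one]
        _ ≤ D^6 * S := mul_le_mul_right (le_max_right _ _) _
    calc MX μ F y ≤ MX μ F1 y + MX μ F2 y := MX_split hF12 y
      _ ≤ MX μ F1 y + D^6 * S := add_le_add_right h2 _
  have hS0 : S ≠ 0 := by
    rcases eq_or_ne (μ F1) 0 with hF10 | hF10
    · -- then MX μ F z = MX μ F2 z > 0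
      have hu1z : MX μ F1 z = 0 := MX_zero hF10 z
      have huz : 0 < MX μ F z := by
        set T := R + dist x₀ z + 1 with hT_def
        have hT : 0 < T := by have := dist_nonneg (x := x₀) (y := z); positivity
        have hzT : z ∈ ball z T := mem_ball_self hT
        have hFT : F ∩ ball z T = F := by
          apply inter_eq_left.mpr
          intro q hq
          have hq' := hFsub hq
          rw [mem_ball] at hq' ⊢
          calc dist q z ≤ dist q x₀ + dist x₀ z := dist_triangle _ _ _
            _ < R + dist x₀ z := by linarith
            _ < T := by rw [hT_def]; linarith
        have hterm : 0 < (μ (ball z T))⁻¹ * μ (F ∩ ball z T) := by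
          rw [hFT]
          exact ENNReal.mul_pos (ENNReal.inv_ne_zero.mpr (hdoub z T hT).2.1.ne) hFpos.ne'
        exact lt_of_lt_of_le hterm (term_le_MX hzT)
      have hu2z : 0 < MX μ F2 z := by
        have := MX_split (μ := μ) hF12 z
        rw [hu1z, zero_add] at this
        exact lt_of_lt_of_le huz this
      have : 0 < (D^3)⁻¹ * MX μ F2 z :=
        ENNReal.mul_pos (ENNReal.inv_ne_zero.mpr hD3_t) hu2z.ne'
      exact (lt_of_lt_of_le this (le_max_right _ _)).ne'
    · have h1 : 0 < (D^2 * μ B')⁻¹ * μ F1 :=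
        ENNReal.mul_pos (ENNReal.inv_ne_zero.mpr
          (ENNReal.mul_ne_top (ENNReal.pow_ne_top hDt) hB't.ne)) hF10
      exact (lt_of_lt_of_le h1 (le_max_left _ _)).ne'
  have hSt : S ≠ ∞ := by
    apply (max_lt ?_ ?_).ne
    · refine ENNReal.mul_lt_top ?_ (lt_of_le_of_lt (measure_mono inter_subset_left) hFt)
      exact (ENNReal.inv_ne_top.mpr (mul_ne_zero (pow_ne_zero _ hD0) hB'0.ne')).lt_top
    · calc (D^3)⁻¹ * MX μ F2 z ≤ 1 * 1 :=
          mul_le_mul' (ENNReal.inv_le_one.mpr (le_trans hD1 (le_self_pow₀ hD1 (by norm_num))))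
            (MX_le_one z)
        _ = 1 := one_mul 1
        _ < ∞ := ENNReal.one_lt_top
  -- real-side quantities
  set σ := S.toReal with hσ_def
  have hσ : 0 < σ := ENNReal.toReal_pos hS0 hSt
  set K1 := Real.log 2 + 6 * Real.log Cd with hK1
  set m := max 0 (Real.log (c * σ)) with hm_def
  set g : X → ℝ := fun y => Real.log (max ((MX μ F1 y).toReal) σ) - Real.log σ with hg_def
  have hu_ne_top : ∀ y : X, MX μ F y ≠ ∞ := fun y =>
    (lt_of_le_of_lt (MX_le_one y) ENNReal.one_lt_top).ne
  have hu1_ne_top : ∀ y : X, MX μ F1 y ≠ ∞ := fun y =>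
    (lt_of_le_of_lt (MX_le_one y) ENNReal.one_lt_top).ne
  have hu1_le_one : ∀ y : X, (MX μ F1 y).toReal ≤ 1 := fun y => by
    have := ENNReal.toReal_mono (by simp) (MX_le_one (μ := μ) (G := F1) y)
    simpa using this
  have hpt : ∀ y ∈ B', |f y - m| ≤ K1 + g y := by
    intro y hy
    have h1 : σ ≤ (MX μ F y).toReal := ENNReal.toReal_mono (hu_ne_top y) (hSle y hy)
    have hD6St : D^6 * S ≠ ∞ := ENNReal.mul_ne_top (ENNReal.pow_ne_top hDt) hSt
    have h2 : (MX μ F y).toReal ≤ (MX μ F1 y).toReal + Cd^6 * σ := by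
      have h3 := ENNReal.toReal_mono (ENNReal.add_ne_top.mpr ⟨hu1_ne_top y, hD6St⟩) (hSub y hy)
      rwa [ENNReal.toReal_add (hu1_ne_top y) hD6St, ENNReal.toReal_mul, ENNReal.toReal_pow,
        ENNReal.toReal_ofReal hCd0.le] at h3
    exact pointwise_core hCd hσ hc h1 h2 ENNReal.toReal_nonneg
  -- integrability
  haveI : IsFiniteMeasure (μ.restrict B') := ⟨by rw [Measure.restrict_apply_univ]; exact hB't⟩
  have hfmeas : Measurable f := by
    apply Measurable.max measurable_const
    exact Real.measurable_log.comp (measurable_const.mul (measurable_MX F).ennreal_toReal)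
  have hfb : ∀ y, |f y| ≤ max 0 (Real.log c) := by
    intro y
    have hle1 : (MX μ F y).toReal ≤ 1 := by
      have := ENNReal.toReal_mono (by simp) (MX_le_one (μ := μ) (G := F) y)
      simpa using this
    have hmul : c * (MX μ F y).toReal ≤ c * 1 :=
      mul_le_mul_of_nonneg_left hle1 hc.le
    rw [abs_of_nonneg (le_max_left _ _)]
    calc f y ≤ max 0 (Real.log (c * 1)) :=
          logplus_mono (by positivity) hmul
      _ = max 0 (Real.log c) := by rw [mul_one]
  have hf_int : Integrable f (μ.restrict B') :=
    ⟨hfmeas.aestronglyMeasurable, HasFiniteIntegral.of_bounded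
      (C := max 0 (Real.log c)) (ae_of_all _ fun y => by rw [Real.norm_eq_abs]; exact hfb y)⟩
  have hgmeas : Measurable g :=
    (Real.measurable_log.comp ((measurable_MX F1).ennreal_toReal.max measurable_const)).sub
      measurable_const
  have hg0 : ∀ y, 0 ≤ g y := fun y =>
    sub_nonneg.mpr (Real.log_le_log hσ (le_max_right _ _))
  have hgb : ∀ y, |g y| ≤ Real.log (max 1 σ) - Real.log σ := by
    intro y
    rw [abs_of_nonneg (hg0 y)]
    have h2 : max ((MX μ F1 y).toReal) σ ≤ max 1 σ := max_le_max (hu1_le_one y) le_rfl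
    exact sub_le_sub_right
      (Real.log_le_log (lt_of_lt_of_le hσ (le_max_right _ _)) h2) _
  have hg_int : Integrable g (μ.restrict B') :=
    ⟨hgmeas.aestronglyMeasurable, HasFiniteIntegral.of_bounded
      (C := Real.log (max 1 σ) - Real.log σ)
      (ae_of_all _ fun y => by rw [Real.norm_eq_abs]; exact hgb y)⟩
  -- layered integral bound for g
  have hIg : ∫ y in B', g y ∂μ ≤ 2 * Cd^7 * (μ B').toReal := by
    rw [MeasureTheory.integral_eq_lintegral_of_nonneg_ae (ae_of_all _ hg0)
      hgmeas.aestronglyMeasurable]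
    have hsetm : ∀ k : ℕ, MeasurableSet {y : X | σ * Real.exp k < (MX μ F1 y).toReal} :=
      fun k => measurableSet_lt measurable_const (measurable_MX F1).ennreal_toReal
    have hind : ∀ k : ℕ, (fun y : X => if σ * Real.exp k < (MX μ F1 y).toReal
        then (1:ℝ≥0∞) else 0) =
        Set.indicator {y : X | σ * Real.exp k < (MX μ F1 y).toReal} (fun _ => (1:ℝ≥0∞)) := by
      intro k; funext y
      simp [Set.indicator_apply, mem_setOf_eq]
    have meas_k : ∀ k : ℕ, Measurable (fun y : X =>
        if σ * Real.exp k < (MX μ F1 y).toReal then (1:ℝ≥0∞) else 0) := by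
      intro k; rw [hind k]; exact (measurable_const.indicator (hsetm k))
    have hEk : ∀ k : ℕ, μ ({y : X | σ * Real.exp k < (MX μ F1 y).toReal} ∩ B')
        ≤ D^7 * ENNReal.ofReal (Real.exp (-(k:ℝ))) * μ B' := by
      intro k
      have hek : (0:ℝ) < Real.exp k := Real.exp_pos _
      rcases eq_or_ne (μ F1) 0 with hF10 | hF10
      · have hz0 : ∀ y : X, MX μ F1 y = 0 := MX_zero hF10
        have hempty : {y : X | σ * Real.exp k < (MX μ F1 y).toReal} = ∅ := by
          ext y
          simp only [mem_setOf_eq, mem_empty_iff_false, iff_false, not_lt, hz0 y]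
          positivity
        simp [hempty]
      · have hsets : {y : X | σ * Real.exp k < (MX μ F1 y).toReal}
            = {y : X | ENNReal.ofReal (σ * Real.exp k) < MX μ F1 y} := by
          ext y
          simp only [mem_setOf_eq]
          exact (ENNReal.ofReal_lt_iff_lt_toReal (by positivity) (hu1_ne_top y)).symm
        set t := ENNReal.ofReal (σ * Real.exp k) with ht_def
        have ht0 : t ≠ 0 := (ENNReal.ofReal_pos.mpr (by positivity)).ne'
        have htt : t ≠ ∞ := ENNReal.ofReal_ne_top
        have hweak := weak_type hCd hdoub hR' hF1m hF1sub t
        rw [hsets, ← ENNReal.mul_le_mul_iff_right ht0 htt]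
        refine le_trans hweak ?_
        have hcanc : (D^2 * μ B')⁻¹ * (D^2 * μ B') = 1 :=
          ENNReal.inv_mul_cancel (mul_ne_zero (pow_ne_zero _ hD0) hB'0.ne')
            (ENNReal.mul_ne_top (ENNReal.pow_ne_top hDt) hB't.ne)
        have key : D^5 * μ F1 = ((D^2 * μ B')⁻¹ * μ F1) * D^7 * μ B' := by
          rw [show ((D^2 * μ B')⁻¹ * μ F1) * D^7 * μ B'
            = ((D^2 * μ B')⁻¹ * (D^2 * μ B')) * (D^5 * μ F1) from by ring, hcanc, one_mul]
        have hSL : (D^2 * μ B')⁻¹ * μ F1 ≤ S := le_max_left _ _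
        have hee : ENNReal.ofReal (Real.exp k) * ENNReal.ofReal (Real.exp (-(k:ℝ))) = 1 := by
          rw [← ENNReal.ofReal_mul (Real.exp_pos _).le, ← Real.exp_add]
          simp
        have hoS : ENNReal.ofReal σ = S := ENNReal.ofReal_toReal hSt
        have hrhs : t * (D^7 * ENNReal.ofReal (Real.exp (-(k:ℝ))) * μ B') = S * D^7 * μ B' := by
          rw [ht_def, ENNReal.ofReal_mul hσ.le]
          calc ENNReal.ofReal σ * ENNReal.ofReal (Real.exp k)
                * (D^7 * ENNReal.ofReal (Real.exp (-(k:ℝ))) * μ B')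
              = (ENNReal.ofReal σ * D^7 * μ B')
                * (ENNReal.ofReal (Real.exp k) * ENNReal.ofReal (Real.exp (-(k:ℝ)))) := by ring
            _ = S * D^7 * μ B' := by rw [hee, mul_one, hoS]
        rw [hrhs, key]
        exact mul_le_mul_left (mul_le_mul_left hSL _) _
    have hlin : ∫⁻ y, ENNReal.ofReal (g y) ∂(μ.restrict B') ≤ 2 * D^7 * μ B' := by
      calc ∫⁻ y, ENNReal.ofReal (g y) ∂(μ.restrict B')
          ≤ ∫⁻ y, ∑' k : ℕ, (if σ * Real.exp k < (MX μ F1 y).toReal then (1:ℝ≥0∞) else 0)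
            ∂(μ.restrict B') := lintegral_mono (fun y => layer_bound hσ)
        _ = ∑' k : ℕ, ∫⁻ y, (if σ * Real.exp k < (MX μ F1 y).toReal then (1:ℝ≥0∞) else 0)
            ∂(μ.restrict B') := lintegral_tsum (fun k => (meas_k k).aemeasurable)
        _ = ∑' k : ℕ, μ ({y : X | σ * Real.exp k < (MX μ F1 y).toReal} ∩ B') := by
            refine tsum_congr fun k => ?_
            rw [hind k, lintegral_indicator (hsetm k), setLIntegral_one,
              Measure.restrict_apply (hsetm k)]
        _ ≤ ∑' k : ℕ, D^7 * ENNReal.ofReal (Real.exp (-(k:ℝ))) * μ B' :=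
            ENNReal.tsum_le_tsum hEk
        _ = (D^7 * μ B') * ∑' k : ℕ, ENNReal.ofReal (Real.exp (-(k:ℝ))) := by
            rw [← ENNReal.tsum_mul_left]
            exact tsum_congr fun k => by ring
        _ ≤ (D^7 * μ B') * 2 := mul_le_mul_right geom_bound _
        _ = 2 * D^7 * μ B' := by ring
    have hfin : (2 * D^7 * μ B') ≠ ∞ :=
      ENNReal.mul_ne_top (ENNReal.mul_ne_top (by simp) (ENNReal.pow_ne_top hDt)) hB't.ne
    calc (∫⁻ y, ENNReal.ofReal (g y) ∂(μ.restrict B')).toReal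
        ≤ (2 * D^7 * μ B').toReal := ENNReal.toReal_mono hfin hlin
      _ = 2 * Cd^7 * (μ B').toReal := by
          rw [ENNReal.toReal_mul, ENNReal.toReal_mul, ENNReal.toReal_pow,
            ENNReal.toReal_ofReal hCd0.le]
          norm_num
  -- averaging
  set Iavg := ⨍ w in B', f w ∂μ with hIavg_def
  have hμt : (0:ℝ) < (μ B').toReal := ENNReal.toReal_pos hB'0.ne' hB't.ne
  have hint_fm : Integrable (fun y => |f y - m|) (μ.restrict B') :=
    (hf_int.sub (integrable_const m)).abs
  have h_fm : ∫ y in B', |f y - m| ∂μ ≤ (K1 + 2 * Cd^7) * (μ B').toReal := by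
    have hb1 : ∫ y in B', |f y - m| ∂μ ≤ ∫ y in B', (K1 + g y) ∂μ :=
      setIntegral_mono_on hint_fm ((integrable_const K1).add hg_int) measurableSet_ball hpt
    have hb2 : ∫ y in B', (K1 + g y) ∂μ = K1 * (μ B').toReal + ∫ y in B', g y ∂μ := by
      rw [integral_add (integrable_const K1) hg_int, setIntegral_const, smul_eq_mul, mul_comm, measureReal_def]
    have := hIg
    rw [hb2] at hb1
    nlinarith [hIg, hμt]
  have hIm : |m - Iavg| * (μ B').toReal ≤ ∫ y in B', |f y - m| ∂μ := by
    have h1 : (Iavg - m) * (μ B').toReal = ∫ y in B', (f y - m) ∂μ := by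
      rw [hIavg_def, setAverage_eq, smul_eq_mul, integral_sub hf_int (integrable_const m),
        setIntegral_const, smul_eq_mul, measureReal_def]
      field_simp
    have h2 : |m - Iavg| * (μ B').toReal = |∫ y in B', (f y - m) ∂μ| := by
      rw [← h1, abs_mul, abs_of_pos hμt, abs_sub_comm]
    rw [h2, ← Real.norm_eq_abs]
    refine le_trans (norm_integral_le_integral_norm _) (le_of_eq ?_)
    simp [Real.norm_eq_abs]
  have hint_fI : Integrable (fun y => |f y - Iavg|) (μ.restrict B') :=
    (hf_int.sub (integrable_const Iavg)).abs
  have hfinal : ∫ y in B', |f y - Iavg| ∂μ ≤ 2 * ((K1 + 2 * Cd^7) * (μ B').toReal) := by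
    have hb1 : ∫ y in B', |f y - Iavg| ∂μ ≤ ∫ y in B', (|f y - m| + |m - Iavg|) ∂μ :=
      integral_mono hint_fI (hint_fm.add (integrable_const _))
        (fun y => abs_sub_le (f y) m Iavg)
    have hb2 : ∫ y in B', (|f y - m| + |m - Iavg|) ∂μ = (∫ y in B', |f y - m| ∂μ) + |m - Iavg| * (μ B').toReal := by
      rw [integral_add hint_fm (integrable_const _), setIntegral_const, smul_eq_mul, mul_comm, measureReal_def]
    rw [hb2] at hb1
    linarith [h_fm, hIm]
  rw [setAverage_eq, smul_eq_mul]
  calc (μ B').toReal⁻¹ * ∫ y in B', |f y - Iavg| ∂μ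
      ≤ (μ B').toReal⁻¹ * (2 * ((K1 + 2 * Cd^7) * (μ B').toReal)) :=
        mul_le_mul_of_nonneg_left hfinal (inv_nonneg.mpr ENNReal.toReal_nonneg)
    _ = 2 * (K1 + 2 * Cd^7) := by field_simp

end Main

/-- There is a constant `A = A(C_d) > 1` such that for every ball `B` and measurable
`F ⊆ B` with `μ(F) > 0`, the function `f = log⁺((μ(B)/μ(F)) · M(χ_F))` belongs to
`BMO(X)` with `‖f‖_{BMO(X)} ≤ A`. -/
theorem log_maximal_indicator_mem_BMO
    {X : Type*} [MetricSpace X] [CompleteSpace X] [MeasurableSpace X] [BorelSpace X]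
    (μ : Measure X) (Cd : ℝ) (hCd : 1 < Cd)
    (hdoub : ∀ (x : X) (r : ℝ), 0 < r →
      0 < μ (ball x r) ∧ μ (ball x r) < ⊤ ∧
      μ (ball x (2 * r)) ≤ ENNReal.ofReal Cd * μ (ball x r)) :
    ∃ A : ℝ, 1 < A ∧
      ∀ (x₀ : X) (R : ℝ), 0 < R →
        ∀ F : Set X, MeasurableSet F → F ⊆ ball x₀ R → 0 < μ F →
          ∀ f : X → ℝ,
            (f = fun y => max 0 (Real.log
              ((μ (ball x₀ R)).toReal / (μ F).toReal *
                (HLMax μ (F.indicator fun _ => (1 : ℝ)) y).toReal))) →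
            LocallyIntegrable f μ ∧
            ∀ (z : X) (R' : ℝ), 0 < R' →
              ⨍ y in ball z R', |f y - ⨍ u in ball z R', f u ∂μ| ∂μ ≤ A := by
  have h2 : (0:ℝ) ≤ Real.log 2 := Real.log_nonneg one_le_two
  have h3 : (0:ℝ) ≤ Real.log Cd := Real.log_nonneg hCd.le
  have hCd0 : (0:ℝ) < Cd := lt_trans one_pos hCd
  have h4 : (0:ℝ) < Cd^7 := by positivity
  refine ⟨2*Real.log 2 + 12*Real.log Cd + 4*Cd^7 + 2, by linarith, ?_⟩
  intro x₀ R hR F hFm hFsub hFpos f hf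
  subst hf
  have hMX : HLMax μ (F.indicator fun _ => (1:ℝ)) = MX μ F := hlmax_eq hFm
  rw [hMX]
  set c := (μ (ball x₀ R)).toReal / (μ F).toReal with hc_def
  have hc0 : 0 ≤ c := by
    rw [hc_def]; positivity
  have hfmeas : Measurable (fun y => max 0 (Real.log (c * (MX μ F y).toReal))) := by
    apply Measurable.max measurable_const
    exact Real.measurable_log.comp (measurable_const.mul (measurable_MX F).ennreal_toReal)
  have hfb : ∀ y, |max 0 (Real.log (c * (MX μ F y).toReal))| ≤ max 0 (Real.log c) := by
    intro y
    have hle1 : (MX μ F y).toReal ≤ 1 := by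
      have := ENNReal.toReal_mono (by simp) (MX_le_one (μ := μ) (G := F) y)
      simpa using this
    have hmul : c * (MX μ F y).toReal ≤ c * 1 := mul_le_mul_of_nonneg_left hle1 hc0
    rw [abs_of_nonneg (le_max_left _ _)]
    calc max 0 (Real.log (c * (MX μ F y).toReal)) ≤ max 0 (Real.log (c * 1)) :=
          logplus_mono (by positivity) hmul
      _ = max 0 (Real.log c) := by rw [mul_one]
  constructor
  · intro x
    refine ⟨ball x 1, Metric.ball_mem_nhds x one_pos, ?_⟩
    haveI : IsFiniteMeasure (μ.restrict (ball x 1)) :=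
      ⟨by rw [Measure.restrict_apply_univ]; exact (hdoub x 1 one_pos).2.1⟩
    exact ⟨hfmeas.aestronglyMeasurable, HasFiniteIntegral.of_bounded
      (C := max 0 (Real.log c)) (ae_of_all _ fun y => by rw [Real.norm_eq_abs]; exact hfb y)⟩
  · intro z R' hR'
    have hest := ball_estimate hCd hdoub hR hFm hFsub hFpos (z := z) (R' := R') hR'
    refine le_trans hest ?_
    linarith
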